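/- For all A,B⊆E such that (V,E∖(A∩B)), (V,E∖A), (V,E∖B) and (V,E∖(A∪B)) are all connected, the function val is supermodular: val(A) + val(B) ≤ val(A∪B) + val(A∩B). -/

import Mathlib

namespace MSTInterdiction

/-- A finite undirected loopless multigraph on vertex type `V` with edge type `E`:
each edge has two distinct endpoints (parallel edges allowed). -/
structure Multigraph (V : Type*) (E : Type*) where
  fst : E → V
  snd : E → V
  loopless : ∀ e, fst e ≠ snd e

variable {V E : Type*}

/-- Adjacency relation using only the edges in `U`. -/
def Multigraph.rel (G : Multigraph V E) (U : Set E) (x y : V) : Prop :=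
  ∃ e ∈ U, (G.fst e = x ∧ G.snd e = y) ∨ (G.fst e = y ∧ G.snd e = x)

/-- The graph `(V, U)` is connected. -/
def Multigraph.Connects (G : Multigraph V E) (U : Set E) : Prop :=
  ∀ x y : V, Relation.EqvGen (G.rel U) x y

/-- `σ(U)`: the number of connected components of `(V, U)`. -/
noncomputable def Multigraph.sigma (G : Multigraph V E) (U : Set E) : ℕ :=
  Nat.card (Quotient (Relation.EqvGen.setoid (G.rel U)))

/-- Total cost (or weight) of a set of edges. -/
noncomputable def setSum (c : E → ℕ) (U : Set E) : ℕ := ∑ᶠ e ∈ U, c e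

/-- `val(U)`: the weight of a minimum spanning tree of `(V, E ∖ U)`, i.e. the minimum
of `∑_{e ∈ T} w e` over `T ⊆ E ∖ U` with `(V, T)` connected. -/
noncomputable def Multigraph.val (G : Multigraph V E) (w : E → ℕ) (U : Set E) : ℕ :=
  sInf {n | ∃ T : Set E, T ⊆ Uᶜ ∧ G.Connects T ∧ setSum w T = n}

/-- `E_{≤ i}`: edges of weight `0` or of weight `2^ℓ` for some natural `ℓ ≤ i`.
In particular `Ele w (-1) = E_{-1}` is the set of edges of weight `0`. -/
def Ele (w : E → ℕ) (i : ℤ) : Set E :=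
  {e | w e = 0 ∨ ∃ ℓ : ℕ, (ℓ : ℤ) ≤ i ∧ w e = 2 ^ ℓ}

/-- The connected component of vertex `v` in the graph `(V, S)`. -/
def Multigraph.component (G : Multigraph V E) (S : Set E) (v : V) : Set V :=
  {u | Relation.EqvGen (G.rel S) v u}

/-- The partition of `V` into the connected components of `(V, S)`. -/
def Multigraph.parts (G : Multigraph V E) (S : Set E) : Set (Set V) :=
  {A | ∃ v : V, A = G.component S v}

/-- Edge `e` has exactly one endpoint in `A`. -/
def Multigraph.oneEnd (G : Multigraph V E) (A : Set V) (e : E) : Prop :=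
  (G.fst e ∈ A ∧ G.snd e ∉ A) ∨ (G.fst e ∉ A ∧ G.snd e ∈ A)

/-- Edge `e` has both endpoints in `A`. -/
def Multigraph.twoEnds (G : Multigraph V E) (A : Set V) (e : E) : Prop :=
  G.fst e ∈ A ∧ G.snd e ∈ A


namespace Multigraph

variable (G : Multigraph V E)

/-- Connectivity relation of `(V, S)`. -/
abbrev conn (S : Set E) : V → V → Prop := Relation.EqvGen (G.rel S)

theorem rel_mono {S S' : Set E} (h : S ⊆ S') {x y} (hr : G.rel S x y) : G.rel S' x y := by
  obtain ⟨e, he, hor⟩ := hr; exact ⟨e, h he, hor⟩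

theorem conn_mono {S S' : Set E} (h : S ⊆ S') {x y} (hc : G.conn S x y) : G.conn S' x y :=
  Relation.EqvGen.mono (fun a b (hr : G.rel S a b) => G.rel_mono h hr) x y hc

theorem conn_refl (S : Set E) (x : V) : G.conn S x x := Relation.EqvGen.refl x

theorem conn_symm {S : Set E} {x y : V} (h : G.conn S x y) : G.conn S y x :=
  Relation.EqvGen.symm x y h

theorem conn_trans {S : Set E} {x y z : V} (h : G.conn S x y) (h' : G.conn S y z) :
    G.conn S x z := Relation.EqvGen.trans x y z h h'

theorem conn_of_rel_imp {S : Set E} {R : Set E} (h : ∀ x y, G.rel S x y → G.conn R x y)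
    {x y : V} (hc : G.conn S x y) : G.conn R x y := by
  induction hc with
  | rel a b hr => exact h a b hr
  | refl a => exact G.conn_refl R a
  | symm a b _ ih => exact G.conn_symm ih
  | trans a b c _ _ ih1 ih2 => exact G.conn_trans ih1 ih2

theorem conn_edge {S : Set E} {e : E} (he : e ∈ S) : G.conn S (G.fst e) (G.snd e) :=
  Relation.EqvGen.rel _ _ ⟨e, he, Or.inl ⟨rfl, rfl⟩⟩

/-- Analysis of connectivity after inserting one edge. -/
theorem conn_insert_iff {S : Set E} {e : E} {x y : V} :
    G.conn (insert e S) x y ↔ G.conn S x y ∨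
      (G.conn S x (G.fst e) ∧ G.conn S (G.snd e) y) ∨
      (G.conn S x (G.snd e) ∧ G.conn S (G.fst e) y) := by
  constructor
  · intro h
    induction h with
    | rel a b hr =>
      obtain ⟨f, hf, hor⟩ := hr
      rcases Set.mem_insert_iff.mp hf with rfl | hfS
      · rcases hor with ⟨h1, h2⟩ | ⟨h1, h2⟩
        · exact Or.inr (Or.inl ⟨h1 ▸ G.conn_refl S a, h2 ▸ G.conn_refl S b⟩)
        · exact Or.inr (Or.inr ⟨h2 ▸ G.conn_refl S a, h1 ▸ G.conn_refl S b⟩)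
      · exact Or.inl (Relation.EqvGen.rel _ _ ⟨f, hfS, hor⟩)
    | refl a => exact Or.inl (G.conn_refl S a)
    | symm a b _ ih =>
      rcases ih with h | ⟨h1, h2⟩ | ⟨h1, h2⟩
      · exact Or.inl (G.conn_symm h)
      · exact Or.inr (Or.inr ⟨G.conn_symm h2, G.conn_symm h1⟩)
      · exact Or.inr (Or.inl ⟨G.conn_symm h2, G.conn_symm h1⟩)
    | trans a b c _ _ ih1 ih2 =>
      rcases ih1 with h | ⟨h1, h2⟩ | ⟨h1, h2⟩ <;>
        rcases ih2 with h' | ⟨h1', h2'⟩ | ⟨h1', h2'⟩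
      · exact Or.inl (G.conn_trans h h')
      · exact Or.inr (Or.inl ⟨G.conn_trans h h1', h2'⟩)
      · exact Or.inr (Or.inr ⟨G.conn_trans h h1', h2'⟩)
      · exact Or.inr (Or.inl ⟨h1, G.conn_trans h2 h'⟩)
      · exact Or.inl (G.conn_trans h1 (G.conn_trans (G.conn_symm (G.conn_trans h2 h1')) h2'))
      · exact Or.inl (G.conn_trans h1 h2')
      · exact Or.inr (Or.inr ⟨h1, G.conn_trans h2 h'⟩)
      · exact Or.inl (G.conn_trans h1 h2')
      · exact Or.inl (G.conn_trans h1 (G.conn_trans (G.conn_symm (G.conn_trans h2 h1')) h2'))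
  · intro h
    have hbase : G.conn (insert e S) (G.fst e) (G.snd e) :=
      G.conn_edge (Set.mem_insert e S)
    have hmono : ∀ {a b : V}, G.conn S a b → G.conn (insert e S) a b :=
      fun h => G.conn_mono (Set.subset_insert e S) h
    rcases h with h | ⟨h1, h2⟩ | ⟨h1, h2⟩
    · exact hmono h
    · exact G.conn_trans (hmono h1) (G.conn_trans hbase (hmono h2))
    · exact G.conn_trans (hmono h1) (G.conn_trans (G.conn_symm hbase) (hmono h2))

open Relation in
/-- The natural map between component quotients for `S ⊆ S'`. -/
noncomputable def qmap {S S' : Set E} (h : S ⊆ S') :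
    Quotient (Relation.EqvGen.setoid (G.rel S)) → Quotient (Relation.EqvGen.setoid (G.rel S')) :=
  Quotient.map' id (fun a b hab => G.conn_mono h hab)

theorem qmap_mk {S S' : Set E} (h : S ⊆ S') (a : V) :
    G.qmap h (Quotient.mk'' a) = Quotient.mk'' a := rfl

theorem qmap_surjective {S S' : Set E} (h : S ⊆ S') : Function.Surjective (G.qmap h) :=
  fun c => Quotient.inductionOn' c fun a => ⟨Quotient.mk'' a, rfl⟩

theorem sigma_le_of_subset [Finite V] {S S' : Set E} (h : S ⊆ S') : G.sigma S' ≤ G.sigma S :=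
  Nat.card_le_card_of_surjective _ (G.qmap_surjective h)

theorem sigma_congr {S S' : Set E} (h : ∀ x y, G.conn S x y ↔ G.conn S' x y) :
    G.sigma S = G.sigma S' :=
  Nat.card_congr (Quotient.congrRight h)

theorem sigma_insert_of_conn [Finite V] {S : Set E} {e : E}
    (hpq : G.conn S (G.fst e) (G.snd e)) : G.sigma (insert e S) = G.sigma S := by
  refine G.sigma_congr fun x y => ?_
  rw [G.conn_insert_iff]
  constructor
  · intro h
    rcases h with h | ⟨h1, h2⟩ | ⟨h1, h2⟩
    · exact h
    · exact G.conn_trans h1 (G.conn_trans hpq h2)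
    · exact G.conn_trans h1 (G.conn_trans (G.conn_symm hpq) h2)
  · exact Or.inl

theorem sigma_le_insert [Finite V] (S : Set E) (e : E) :
    G.sigma S ≤ G.sigma (insert e S) + 1 := by
  classical
  set Q1 := Quotient (Relation.EqvGen.setoid (G.rel S))
  set Q2 := Quotient (Relation.EqvGen.setoid (G.rel (insert e S)))
  have π := G.qmap (S := S) (S' := insert e S) (Set.subset_insert e S)
  let g : Q1 → Q2 ⊕ Unit := fun x =>
    if x = Quotient.mk'' (G.fst e) then Sum.inr ()
    else Sum.inl (G.qmap (Set.subset_insert e S) x)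
  have hg : Function.Injective g := by
    intro x y hxy
    by_cases hx : x = Quotient.mk'' (G.fst e) <;> by_cases hy : y = Quotient.mk'' (G.fst e)
    · rw [hx, hy]
    · simp only [g, if_pos hx, if_neg hy] at hxy; exact absurd hxy (by simp)
    · simp only [g, if_neg hx, if_pos hy] at hxy; exact absurd hxy (by simp)
    · simp only [g, if_neg hx, if_neg hy, Sum.inl.injEq] at hxy
      induction x using Quotient.inductionOn' with | h a =>
      induction y using Quotient.inductionOn' with | h b =>
      rw [qmap_mk, qmap_mk, Quotient.eq''] at hxy
      have := G.conn_insert_iff.mp hxy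
      rcases this with h | ⟨h1, h2⟩ | ⟨h1, h2⟩
      · exact Quotient.sound' h
      · exact absurd (Quotient.sound' h1) hx
      · exact absurd (Quotient.sound' (G.conn_symm h2)) hy
  calc G.sigma S ≤ Nat.card (Q2 ⊕ Unit) := Nat.card_le_card_of_injective g hg
    _ = G.sigma (insert e S) + 1 := by
        rw [Nat.card_sum]; simp [Multigraph.sigma]; rfl

theorem sigma_insert_add_one [Finite V] {S : Set E} {e : E}
    (hpq : ¬ G.conn S (G.fst e) (G.snd e)) :
    G.sigma (insert e S) + 1 = G.sigma S := by
  classical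
  refine le_antisymm ?_ (G.sigma_le_insert S e)
  set Q1 := Quotient (Relation.EqvGen.setoid (G.rel S))
  set Q2 := Quotient (Relation.EqvGen.setoid (G.rel (insert e S)))
  have hsurj : Function.Surjective (G.qmap (Set.subset_insert e S)) :=
    G.qmap_surjective _
  have hpq2 : (Quotient.mk'' (G.fst e) : Q2) = Quotient.mk'' (G.snd e) :=
    Quotient.sound' (G.conn_edge (Set.mem_insert e S))
  let s : Q2 → Q1 := fun c =>
    if c = Quotient.mk'' (G.fst e) then Quotient.mk'' (G.snd e)
    else Function.surjInv hsurj c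
  have hs : ∀ c, G.qmap (Set.subset_insert e S) (s c) = c := by
    intro c
    by_cases hc : c = Quotient.mk'' (G.fst e)
    · simp only [s, if_pos hc, qmap_mk]; rw [hc]; exact hpq2.symm
    · simp only [s, if_neg hc]; exact Function.surjInv_eq hsurj c
  have hsne : ∀ c, s c ≠ Quotient.mk'' (G.fst e) := by
    intro c hceq
    by_cases hc : c = Quotient.mk'' (G.fst e)
    · simp only [s, if_pos hc] at hceq
      exact hpq (G.conn_symm (Quotient.exact' hceq))
    · apply hc
      rw [← hs c, hceq, qmap_mk]
  let f : Q2 ⊕ Unit → Q1 := Sum.elim s (fun _ => Quotient.mk'' (G.fst e))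
  have hf : Function.Injective f := by
    intro x y hxy
    match x, y with
    | Sum.inl c, Sum.inl c' =>
      simp only [f, Sum.elim_inl] at hxy
      have : G.qmap (Set.subset_insert e S) (s c) = G.qmap (Set.subset_insert e S) (s c') := by
        rw [hxy]
      rw [hs, hs] at this; rw [this]
    | Sum.inl c, Sum.inr _ => exact absurd hxy (hsne c)
    | Sum.inr _, Sum.inl c => exact absurd hxy.symm (hsne c)
    | Sum.inr _, Sum.inr _ => rfl
  calc G.sigma (insert e S) + 1 = Nat.card (Q2 ⊕ Unit) := by rw [Nat.card_sum]; simp [Multigraph.sigma]; rfl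
    _ ≤ G.sigma S := Nat.card_le_card_of_injective f hf

theorem sigma_union_le [Finite V] (S : Set E) (D : Finset E) :
    G.sigma S ≤ G.sigma (S ∪ ↑D) + D.card := by
  classical
  induction D using Finset.induction with
  | empty => simp
  | @insert e D he ih =>
    have h1 : G.sigma (S ∪ ↑D) ≤ G.sigma (insert e (S ∪ ↑D)) + 1 := G.sigma_le_insert _ e
    have h2 : (S ∪ ↑(insert e D)) = insert e (S ∪ ↑D) := by
      rw [Finset.coe_insert, Set.union_insert]
    rw [h2, Finset.card_insert_of_notMem he]
    omega

theorem sigma_step [Finite V] {X Y : Set E} (hXY : X ⊆ Y) (e : E) :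
    G.sigma (insert e X) + G.sigma Y ≤ G.sigma X + G.sigma (insert e Y) := by
  by_cases hpq : G.conn X (G.fst e) (G.snd e)
  · rw [G.sigma_insert_of_conn hpq, G.sigma_insert_of_conn (G.conn_mono hXY hpq)]
  · have h1 := G.sigma_insert_add_one hpq
    have h2 := G.sigma_le_insert Y e
    omega

theorem sigma_diminishing [Finite V] {X Y : Set E} (hXY : X ⊆ Y) (D : Finset E) :
    G.sigma (X ∪ ↑D) + G.sigma Y ≤ G.sigma X + G.sigma (Y ∪ ↑D) := by
  classical
  induction D using Finset.induction with
  | empty => simp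
  | @insert e D he ih =>
    have hXY' : X ∪ ↑D ⊆ Y ∪ ↑D := Set.union_subset_union_left _ hXY
    have hstep := G.sigma_step hXY' e
    have h2 : ∀ Z : Set E, (Z ∪ ↑(insert e D)) = insert e (Z ∪ ↑D) := by
      intro Z
      simp only [Finset.coe_insert, Set.union_insert]
    rw [h2, h2]
    omega

theorem sigma_supermodular [Finite V] [Fintype E] (S T : Set E) :
    G.sigma S + G.sigma T ≤ G.sigma (S ∩ T) + G.sigma (S ∪ T) := by
  classical
  have hfin : (S \ T).Finite := Set.toFinite _
  have h1 : S ∩ T ∪ ↑hfin.toFinset = S := by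
    rw [Set.Finite.coe_toFinset, Set.inter_union_diff]
  have h2 : T ∪ ↑hfin.toFinset = S ∪ T := by
    rw [Set.Finite.coe_toFinset]
    ext x; simp [Set.mem_diff]; tauto
  have := G.sigma_diminishing (Set.inter_subset_right (s := S) (t := T)) hfin.toFinset
  rw [h1, h2] at this
  omega

theorem conn_empty_iff {x y : V} : G.conn (∅ : Set E) x y ↔ x = y := by
  constructor
  · intro h
    induction h with
    | rel a b hr => obtain ⟨e, he, _⟩ := hr; exact absurd he (Set.notMem_empty e)
    | refl a => rfl
    | symm a b _ ih => exact ih.symm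
    | trans a b c _ _ ih1 ih2 => exact ih1.trans ih2
  · rintro rfl; exact G.conn_refl _ x

theorem sigma_empty : G.sigma (∅ : Set E) = Nat.card V := by
  refine Nat.card_congr (Equiv.ofBijective (Quotient.mk'' : V → _) ⟨?_, ?_⟩).symm
  · intro a b h
    exact G.conn_empty_iff.mp (Quotient.exact' h)
  · exact fun c => Quotient.inductionOn' c fun a => ⟨a, rfl⟩

theorem sigma_eq_one [Finite V] [Nonempty V] {S : Set E} (h : G.Connects S) :
    G.sigma S = 1 := by
  rw [Multigraph.sigma, Nat.card_eq_one_iff_unique]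
  constructor
  · constructor
    intro a b
    induction a using Quotient.inductionOn' with | h x =>
    induction b using Quotient.inductionOn' with | h y =>
    exact Quotient.sound' (h x y)
  · exact ⟨Quotient.mk'' (Classical.arbitrary V)⟩

/-- Greedy forest extension: any "forest" `R` inside `S` extends to a spanning forest of `S`. -/
theorem exists_forest_ext [Fintype V] [Fintype E] [DecidableEq E] :
    ∀ (n : ℕ) (R S : Finset E), R ⊆ S → R.card + G.sigma ↑R = Fintype.card V →
      (S \ R).card = n →
      ∃ T : Finset E, R ⊆ T ∧ T ⊆ S ∧ (∀ x y, G.conn ↑T x y ↔ G.conn ↑S x y) ∧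
        T.card + G.sigma ↑T = Fintype.card V ∧
        (∀ f ∈ T, f ∉ R → ¬ G.conn ↑R (G.fst f) (G.snd f)) := by
  intro n
  induction n using Nat.strong_induction_on with
  | _ n ih =>
    intro R S hRS hcard hn
    by_cases hall : ∀ e ∈ S, e ∉ R → G.conn ↑R (G.fst e) (G.snd e)
    · refine ⟨R, Finset.Subset.refl R, hRS, ?_, hcard, fun f hf hfn => absurd hf hfn⟩
      intro x y
      constructor
      · exact fun h => G.conn_mono (by exact_mod_cast hRS) h
      · intro h
        refine G.conn_of_rel_imp (fun a b hr => ?_) h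
        obtain ⟨e, heS, hor⟩ := hr
        by_cases heR : e ∈ R
        · exact Relation.EqvGen.rel _ _ ⟨e, heR, hor⟩
        · have hc := hall e heS heR
          rcases hor with ⟨h1, h2⟩ | ⟨h1, h2⟩
          · exact h1 ▸ h2 ▸ hc
          · exact h1 ▸ h2 ▸ G.conn_symm hc
    · push_neg at hall
      obtain ⟨e, heS, heR, hnc⟩ := hall
      set R' : Finset E := insert e R with hR'
      have hR'S : R' ⊆ S := Finset.insert_subset heS hRS
      have hcoeR' : (↑R' : Set E) = insert e ↑R := by simp [hR']
      have hsig : G.sigma ↑R' + 1 = G.sigma ↑R := by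
        rw [hcoeR']; exact G.sigma_insert_add_one hnc
      have hcardR'' : R'.card = R.card + 1 := by
        rw [hR', Finset.card_insert_of_notMem heR]
      have hcardR' : R'.card + G.sigma ↑R' = Fintype.card V := by omega
      have hmeas : S \ R' = (S \ R).erase e := by
        ext x
        simp only [Finset.mem_sdiff, Finset.mem_erase, Finset.mem_insert, hR']
        tauto
      have hlt : (S \ R').card < n := by
        rw [hmeas]
        have he' : e ∈ S \ R := Finset.mem_sdiff.mpr ⟨heS, heR⟩
        rw [Finset.card_erase_of_mem he']
        have hpos : 0 < (S \ R).card := Finset.card_pos.mpr ⟨e, he'⟩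
        omega
      obtain ⟨T, hT1, hT2, hT3, hT4, hT5⟩ := ih _ hlt R' S hR'S hcardR' rfl
      refine ⟨T, Finset.Subset.trans (Finset.subset_insert e R) hT1, hT2, hT3, hT4, ?_⟩
      intro f hf hfR
      by_cases hfe : f = e
      · subst hfe; exact hnc
      · have hfR' : f ∉ R' := by simp [hR', hfe, hfR]
        intro hc
        exact hT5 f hf hfR' (G.conn_mono (by rw [hcoeR']; exact Set.subset_insert e ↑R) hc)

/-- Kruskal: a simultaneous spanning forest for all weight thresholds up to `t`. -/
theorem exists_kruskal [Fintype V] [Fintype E] [DecidableEq E] (w : E → ℕ) (F : Finset E) :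
    ∀ t : ℕ, ∃ T : Finset E, T ⊆ F.filter (fun e => w e ≤ t) ∧
      ∀ s ≤ t, ((T.filter (fun e => w e ≤ s)).card
          + G.sigma ↑(F.filter (fun e => w e ≤ s)) = Fintype.card V ∧
        (∀ x y, G.conn ↑(T.filter (fun e => w e ≤ s)) x y ↔
          G.conn ↑(F.filter (fun e => w e ≤ s)) x y)) := by
  intro t
  induction t with
  | zero =>
    have h0 : (∅ : Finset E).card + G.sigma ↑(∅ : Finset E) = Fintype.card V := by
      simp only [Finset.card_empty, Finset.coe_empty, G.sigma_empty, Nat.card_eq_fintype_card,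
        zero_add]
    obtain ⟨T, _, hT2, hT3, hT4, _⟩ :=
      G.exists_forest_ext _ ∅ (F.filter (fun e => w e ≤ 0)) (Finset.empty_subset _) h0 rfl
    refine ⟨T, hT2, ?_⟩
    intro s hs
    interval_cases s
    have hTfil : T.filter (fun e => w e ≤ 0) = T :=
      Finset.filter_true_of_mem (fun e he => (Finset.mem_filter.mp (hT2 he)).2)
    rw [hTfil]
    refine ⟨?_, hT3⟩
    rw [← G.sigma_congr hT3]
    exact hT4
  | succ t iht =>
    obtain ⟨T, hTsub, hinv⟩ := iht
    have hTall : ∀ e ∈ T, w e ≤ t := fun e he => (Finset.mem_filter.mp (hTsub he)).2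
    have hTfil : T.filter (fun e => w e ≤ t) = T := Finset.filter_true_of_mem hTall
    obtain ⟨hcardT, hconnT⟩ := hinv t (le_refl t)
    rw [hTfil] at hcardT hconnT
    have hforest : T.card + G.sigma ↑T = Fintype.card V := by
      rw [G.sigma_congr hconnT]; exact hcardT
    have hmono : F.filter (fun e => w e ≤ t) ⊆ F.filter (fun e => w e ≤ t + 1) :=
      fun e he => by
        have := Finset.mem_filter.mp he
        exact Finset.mem_filter.mpr ⟨this.1, by omega⟩
    have hTsub' : T ⊆ F.filter (fun e => w e ≤ t + 1) := hTsub.trans hmono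
    obtain ⟨T', hT'1, hT'2, hT'3, hT'4, hT'5⟩ :=
      G.exists_forest_ext _ T (F.filter (fun e => w e ≤ t + 1)) hTsub' hforest rfl
    refine ⟨T', hT'2, ?_⟩
    intro s hs
    rcases Nat.lt_or_ge s (t + 1) with hst | hst
    · -- s ≤ t : new edges all have weight > t ≥ s
      have hst' : s ≤ t := by omega
      have hfil : T'.filter (fun e => w e ≤ s) = T.filter (fun e => w e ≤ s) := by
        ext f
        simp only [Finset.mem_filter]
        constructor
        · rintro ⟨hfT', hfs⟩
          refine ⟨?_, hfs⟩
          by_contra hfT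
          have hfF : f ∈ F.filter (fun e => w e ≤ t) := by
            have := Finset.mem_filter.mp (hT'2 hfT')
            exact Finset.mem_filter.mpr ⟨this.1, by omega⟩
          have hconn : G.conn ↑(F.filter (fun e => w e ≤ t)) (G.fst f) (G.snd f) :=
            G.conn_edge (by exact_mod_cast hfF)
          exact hT'5 f hfT' hfT ((hconnT _ _).mpr hconn)
        · rintro ⟨hfT, hfs⟩
          exact ⟨hT'1 hfT, hfs⟩
      rw [hfil]
      exact hinv s hst'
    · -- s = t + 1
      have hseq : s = t + 1 := by omega
      subst hseq
      have hT'fil : T'.filter (fun e => w e ≤ t + 1) = T' :=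
        Finset.filter_true_of_mem (fun e he => (Finset.mem_filter.mp (hT'2 he)).2)
      rw [hT'fil]
      refine ⟨?_, hT'3⟩
      rw [← G.sigma_congr hT'3]
      exact hT'4

theorem sum_weights (w : E → ℕ) (T : Finset E) (N : ℕ) (hN : ∀ e ∈ T, w e ≤ N) :
    ∑ e ∈ T, w e = ∑ t ∈ Finset.range N, (T.filter (fun e => ¬ w e ≤ t)).card := by
  have hc : ∀ t, (T.filter (fun e => ¬ w e ≤ t)).card = ∑ e ∈ T, if ¬ w e ≤ t then 1 else 0 :=
    fun t => Finset.card_filter _ _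
  simp only [hc]
  rw [Finset.sum_comm]
  refine Finset.sum_congr rfl fun e he => ?_
  have h1 : ∑ t ∈ Finset.range N, (if ¬ w e ≤ t then 1 else 0)
      = ((Finset.range N).filter (fun t => ¬ w e ≤ t)).card := (Finset.card_filter _ _).symm
  rw [h1]
  have h2 : (Finset.range N).filter (fun t => ¬ w e ≤ t) = Finset.range (w e) := by
    ext t
    simp only [Finset.mem_filter, Finset.mem_range]
    have := hN e he
    omega
  rw [h2, Finset.card_range]

/-- Threshold decomposition of the MST value. -/
theorem val_add_eq [Fintype V] [Fintype E] [Nonempty V] (w : E → ℕ) (U : Set E)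
    (hU : G.Connects Uᶜ) (N : ℕ) (hN : ∀ e : E, w e < N) :
    G.val w U + N = ∑ t ∈ Finset.range N, G.sigma {e | e ∉ U ∧ w e ≤ t} := by
  classical
  rcases Nat.eq_zero_or_pos N with rfl | hNpos
  · have h0 : (0 : ℕ) ∈ {n | ∃ T : Set E, T ⊆ Uᶜ ∧ G.Connects T ∧ setSum w T = n} := by
      refine ⟨Uᶜ, le_refl _, hU, ?_⟩
      have hEe : IsEmpty E := ⟨fun e => absurd (hN e) (by omega)⟩
      have : Uᶜ = (∅ : Set E) := Set.eq_empty_of_isEmpty _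
      rw [this, setSum, finsum_mem_empty]
    simp only [Finset.range_zero, Finset.sum_empty, Nat.add_zero]
    exact Nat.sInf_eq_zero.mpr (Or.inl h0)
  · set Ffin : Finset E := (Set.toFinite Uᶜ).toFinset with hFfin
    have hFcoe : (↑Ffin : Set E) = Uᶜ := Set.Finite.coe_toFinset _
    have hset : ∀ t : ℕ, (↑(Ffin.filter (fun e => w e ≤ t)) : Set E) = {e | e ∉ U ∧ w e ≤ t} := by
      intro t
      ext e
      simp only [Finset.coe_filter, Set.mem_setOf_eq, Set.Finite.mem_toFinset, hFfin,
        Set.mem_compl_iff]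
    obtain ⟨T, hTsub, hinv⟩ := G.exists_kruskal w Ffin (N - 1)
    have hwleN1 : ∀ e : E, w e ≤ N - 1 := fun e => by have := hN e; omega
    have hFfil : Ffin.filter (fun e => w e ≤ N - 1) = Ffin :=
      Finset.filter_true_of_mem (fun e _ => hwleN1 e)
    have hTfil : T.filter (fun e => w e ≤ N - 1) = T :=
      Finset.filter_true_of_mem (fun e _ => hwleN1 e)
    obtain ⟨hcardN1, hconnN1⟩ := hinv (N - 1) (le_refl _)
    rw [hTfil, hFfil] at hcardN1 hconnN1
    have hTconn : G.Connects ↑T := fun x y =>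
      (hconnN1 x y).mpr (by rw [hFcoe]; exact hU x y)
    have hTUc : (↑T : Set E) ⊆ Uᶜ := by
      rw [← hFcoe]; exact_mod_cast hTsub.trans (Finset.filter_subset _ _)
    have hTmem : (∑ e ∈ T, w e) ∈ {n | ∃ T' : Set E, T' ⊆ Uᶜ ∧ G.Connects T' ∧ setSum w T' = n} :=
      ⟨↑T, hTUc, hTconn, by rw [setSum, finsum_mem_coe_finset]⟩
    have hsigF : G.sigma ↑Ffin = 1 := by rw [hFcoe]; exact G.sigma_eq_one hU
    have hper : ∀ t ∈ Finset.range N,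
        (T.filter (fun e => ¬ w e ≤ t)).card + 1 = G.sigma {e | e ∉ U ∧ w e ≤ t} := by
      intro t ht
      have htN : t ≤ N - 1 := by
        have := Finset.mem_range.mp ht; omega
      obtain ⟨hc, _⟩ := hinv t htN
      have hsplit := Finset.card_filter_add_card_filter_not
        (s := T) (p := fun e => w e ≤ t)
      rw [← hset t]
      omega
    have hTw : (∑ e ∈ T, w e) + N = ∑ t ∈ Finset.range N, G.sigma {e | e ∉ U ∧ w e ≤ t} := by
      rw [sum_weights w T N (fun e _ => le_of_lt (hN e))]
      rw [← Finset.sum_congr rfl hper, Finset.sum_add_distrib, Finset.sum_const,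
        Finset.card_range, smul_eq_mul, mul_one]
    refine le_antisymm ?_ ?_
    · have hle : G.val w U ≤ ∑ e ∈ T, w e := Nat.sInf_le hTmem
      omega
    · obtain ⟨T₀, hT0sub, hT0conn, hT0sum⟩ := Nat.sInf_mem ⟨_, hTmem⟩
      set T0f : Finset E := (Set.toFinite T₀).toFinset with hT0f
      have hT0coe : (↑T0f : Set E) = T₀ := Set.Finite.coe_toFinset _
      have hT0w : G.val w U = ∑ e ∈ T0f, w e := by
        rw [Multigraph.val, ← hT0sum, ← hT0coe, setSum, finsum_mem_coe_finset]
      have hper0 : ∀ t ∈ Finset.range N,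
          G.sigma {e | e ∉ U ∧ w e ≤ t} ≤ (T0f.filter (fun e => ¬ w e ≤ t)).card + 1 := by
        intro t ht
        have hsub1 : (↑(T0f.filter (fun e => w e ≤ t)) : Set E) ⊆ {e | e ∉ U ∧ w e ≤ t} := by
          intro e he
          simp only [Finset.coe_filter, Set.mem_setOf_eq, Set.Finite.mem_toFinset, hT0f] at he
          exact ⟨hT0sub he.1, he.2⟩
        have h1 : G.sigma {e | e ∉ U ∧ w e ≤ t}
            ≤ G.sigma ↑(T0f.filter (fun e => w e ≤ t)) := G.sigma_le_of_subset hsub1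
        have h2 : G.sigma ↑(T0f.filter (fun e => w e ≤ t))
            ≤ G.sigma (↑(T0f.filter (fun e => w e ≤ t)) ∪ ↑(T0f.filter (fun e => ¬ w e ≤ t)))
              + (T0f.filter (fun e => ¬ w e ≤ t)).card := G.sigma_union_le _ _
        have h3 : (↑(T0f.filter (fun e => w e ≤ t)) : Set E)
            ∪ ↑(T0f.filter (fun e => ¬ w e ≤ t)) = T₀ := by
          rw [← Finset.coe_union, Finset.filter_union_filter_not_eq, hT0coe]
        rw [h3] at h2
        have h4 : G.sigma T₀ = 1 := G.sigma_eq_one hT0conn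
        omega
      have hsum0 := Finset.sum_le_sum hper0
      rw [Finset.sum_add_distrib, Finset.sum_const, Finset.card_range, smul_eq_mul,
        mul_one, ← sum_weights w T0f N (fun e _ => le_of_lt (hN e)), ← hT0w] at hsum0
      exact hsum0

theorem val_supermodular'
    [Fintype V] [Fintype E]
    (w : E → ℕ) (A B : Set E)
    (hInter : G.Connects (A ∩ B)ᶜ)
    (hA : G.Connects Aᶜ)
    (hB : G.Connects Bᶜ)
    (hUnion : G.Connects (A ∪ B)ᶜ) :
    G.val w A + G.val w B ≤ G.val w (A ∪ B) + G.val w (A ∩ B) := by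
  classical
  cases isEmpty_or_nonempty V with
  | inl hV =>
    have hz : ∀ U : Set E, G.val w U = 0 := by
      intro U
      refine Nat.sInf_eq_zero.mpr (Or.inl ⟨∅, Set.empty_subset _,
        fun x y => (IsEmpty.false x).elim, by rw [setSum, finsum_mem_empty]⟩)
    simp [hz]
  | inr hV =>
    set N : ℕ := (Finset.univ.sup w) + 1 with hNdef
    have hN : ∀ e : E, w e < N := fun e =>
      Nat.lt_succ_of_le (Finset.le_sup (Finset.mem_univ e))
    have h1 := G.val_add_eq w A hA N hN
    have h2 := G.val_add_eq w B hB N hN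
    have h3 := G.val_add_eq w (A ∪ B) hUnion N hN
    have h4 := G.val_add_eq w (A ∩ B) hInter N hN
    have hsum : ∀ t ∈ Finset.range N,
        G.sigma {e | e ∉ A ∧ w e ≤ t} + G.sigma {e | e ∉ B ∧ w e ≤ t}
          ≤ G.sigma {e | e ∉ A ∪ B ∧ w e ≤ t} + G.sigma {e | e ∉ A ∩ B ∧ w e ≤ t} := by
      intro t _
      have hint : {e | e ∉ A ∧ w e ≤ t} ∩ {e | e ∉ B ∧ w e ≤ t}
          = {e | e ∉ A ∪ B ∧ w e ≤ t} := by
        ext e; simp only [Set.mem_inter_iff, Set.mem_setOf_eq, Set.mem_union]; tauto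
      have huni : {e | e ∉ A ∧ w e ≤ t} ∪ {e | e ∉ B ∧ w e ≤ t}
          = {e | e ∉ A ∩ B ∧ w e ≤ t} := by
        ext e; simp only [Set.mem_union, Set.mem_setOf_eq, Set.mem_inter_iff]; tauto
      have hsm := G.sigma_supermodular {e | e ∉ A ∧ w e ≤ t} {e | e ∉ B ∧ w e ≤ t}
      rw [hint, huni] at hsm
      exact hsm
    have hsums := Finset.sum_le_sum hsum
    rw [Finset.sum_add_distrib, Finset.sum_add_distrib] at hsums
    omega

end Multigraph

/-- The MST weight `val` is supermodular: whenever removing `A∩B`, `A`,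
`B`, and `A∪B` each leaves the graph connected,
`val(A) + val(B) ≤ val(A∪B) + val(A∩B)`. -/
theorem val_supermodular
    [Fintype V] [Fintype E]
    (G : Multigraph V E) (w : E → ℕ) (A B : Set E)
    (hInter : G.Connects (A ∩ B)ᶜ)
    (hA : G.Connects Aᶜ)
    (hB : G.Connects Bᶜ)
    (hUnion : G.Connects (A ∪ B)ᶜ) :
    G.val w A + G.val w B ≤ G.val w (A ∪ B) + G.val w (A ∩ B) :=
  Multigraph.val_supermodular' G w A B hInter hA hB hUnion

end MSTInterdiction
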